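/- For a partition λ of n, the map σ ↦ σ/d gives a bijection between the set of row-strict tableaux of shape λ with maximal divisor exactly d and the set of indivisible row-strict tableaux of shape λ/d, for each common divisor d of the parts of λ. -/

import Mathlib

open scoped Classical

/-- The set of boxes (row, column), 0-indexed, of the Young diagram of a partition given
as a list of row lengths. -/
def cells (L : List ℕ) : Set (ℕ × ℕ) := {p | p.1 < L.length ∧ p.2 < L.getD p.1 0}

/-- `pos` encodes a tableau of shape `L` with entries `1, …, n`:  `pos i` is the (row,
column) of the box labeled `i`.  It is injective on `{1,…,n}` with image the set of
boxes, and is normalized to `(0,0)` outside `{1,…,n}`. -/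
def IsTab (L : List ℕ) (n : ℕ) (pos : ℕ → ℕ × ℕ) : Prop :=
  Set.InjOn pos (Set.Icc 1 n) ∧ pos '' Set.Icc 1 n = cells L ∧
    ∀ i, i ∉ Set.Icc 1 n → pos i = (0, 0)

/-- Row-strictness: entries increase along each row (left to right). -/
def RowStrict (n : ℕ) (pos : ℕ → ℕ × ℕ) : Prop :=
  ∀ i j, i ∈ Set.Icc 1 n → j ∈ Set.Icc 1 n →
    (pos j).1 = (pos i).1 → (pos j).2 = (pos i).2 + 1 → i < j

/-- A row-strict tableau of shape `L` with entries `1, …, n`. -/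
def IsRST (L : List ℕ) (n : ℕ) (pos : ℕ → ℕ × ℕ) : Prop :=
  IsTab L n pos ∧ RowStrict n pos

/-- `(i, j)` with `i > j` is a Springer pair: `i` lies in the same column as `j` or in a
column strictly to its left, and if the box directly right of `j` is labeled `r` then
`i < r`. -/
def SpringerPair (n : ℕ) (pos : ℕ → ℕ × ℕ) (i j : ℕ) : Prop :=
  1 ≤ j ∧ j < i ∧ i ≤ n ∧ (pos i).2 ≤ (pos j).2 ∧
    ∀ r ∈ Set.Icc 1 n, pos r = ((pos j).1, (pos j).2 + 1) → i < r

/-- A Springer inversion is a Springer pair `(i, j)` such that if `i` is in the same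
column as `j` then `i` lies strictly below `j`. -/
def SpringerInv (n : ℕ) (pos : ℕ → ℕ × ℕ) (i j : ℕ) : Prop :=
  SpringerPair n pos i j ∧ ((pos i).2 = (pos j).2 → (pos j).1 < (pos i).1)

/-- The number of Springer pairs of a tableau. -/
noncomputable def pairsCount (n : ℕ) (pos : ℕ → ℕ × ℕ) : ℕ :=
  {p : ℕ × ℕ | SpringerPair n pos p.1 p.2}.ncard

/-- The number of Springer inversions of a tableau. -/
noncomputable def invCount (n : ℕ) (pos : ℕ → ℕ × ℕ) : ℕ :=
  {p : ℕ × ℕ | SpringerInv n pos p.1 p.2}.ncard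

/-- `d` is a divisor of the tableau: `d ∣ n` and the tableau decomposes into blocks of
`d` consecutive boxes with consecutive labels, i.e. whenever `d ∤ i` the box labeled
`i + 1` is directly to the right of the box labeled `i`. -/
def TabDivisor (n d : ℕ) (pos : ℕ → ℕ × ℕ) : Prop :=
  d ∣ n ∧ ∀ i, 1 ≤ i → i < n → ¬ d ∣ i → pos (i + 1) = ((pos i).1, (pos i).2 + 1)

/-- The quotient tableau `σ/d`: each block of `d` boxes is merged into a single box,
labeled in the same relative order (the block containing `d·m` gets label `m`). -/
def quotTab (d : ℕ) (pos : ℕ → ℕ × ℕ) : ℕ → ℕ × ℕ :=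
  fun m => ((pos (d * m)).1, ((pos (d * m)).2 + 1) / d - 1)

/-- `Σ_i (i−1)·λ_i`, the dimension of the Springer fiber of Jordan type `λ`. -/
def dimB (L : List ℕ) : ℕ := ∑ i ∈ Finset.range L.length, i * L.getD i 0

/-- `L` is a partition of `n`: weakly decreasing positive parts summing to `n`. -/
def IsPartition (L : List ℕ) (n : ℕ) : Prop :=
  L.sum = n ∧ L.Pairwise (· ≥ ·) ∧ ∀ x ∈ L, 0 < x

section Aux

lemma aux_mul_succ (b d : ℕ) : (b+1)*d = b*d + d := by ring

lemma aux_div_lt {d q j : ℕ} (hd : 0 < d) (hj : j < d * q) : j / d < q := by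
  have e : d * q = q * d := by ring
  exact (Nat.div_lt_iff_lt_mul hd).mpr (by omega)

/-- Within a block of `d` consecutive labels, boxes go right step by step. -/
lemma blockA {n d q : ℕ} {σ : ℕ → ℕ × ℕ} (hd : 0 < d) (hq : n = d * q)
    (hdiv : TabDivisor n d σ) {b k : ℕ} (hb : b < q) (hk : k < d) :
    σ (b*d + 1 + k) = ((σ (b*d+1)).1, (σ (b*d+1)).2 + k) := by
  have hbd : b*d + d ≤ n := by
    have h1 : (b+1)*d ≤ q*d := Nat.mul_le_mul_right d hb
    have h2 := aux_mul_succ b d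
    have h3 : q*d = d*q := by ring
    omega
  induction k with
  | zero => simp
  | succ k ih =>
    have ihk := ih (by omega)
    have hnd : ¬ d ∣ b*d + 1 + k := by
      intro hdvd
      have hdk : d ∣ (b*d + 1 + k) - b*d := Nat.dvd_sub hdvd (dvd_mul_left d b)
      rw [show (b*d + 1 + k) - b*d = 1+k from by omega] at hdk
      have := Nat.le_of_dvd (by omega) hdk
      omega
    have hlt : b*d + 1 + k < n := by omega
    have := hdiv.2 (b*d + 1 + k) (by omega) hlt hnd
    rw [show b*d + 1 + (k+1) = b*d+1+k+1 from by ring, this, ihk]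
    simp [Nat.add_assoc]

/-- Every label `j ∈ [1,n]` decomposes as `b*d + 1 + k` with `b < q`, `k < d`. -/
lemma aux_dec {n d q j : ℕ} (hd : 0 < d) (hq : n = d * q) (h1 : 1 ≤ j) (h2 : j ≤ n) :
    j = ((j-1)/d)*d + 1 + (j-1)%d ∧ (j-1)/d < q ∧ (j-1)%d < d := by
  have hdm := Nat.div_add_mod (j-1) d
  have e : ((j-1)/d)*d = d*((j-1)/d) := by ring
  refine ⟨by omega, aux_div_lt hd (by omega), Nat.mod_lt _ hd⟩

/-- Each block starts at a column divisible by `d`. -/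
lemma blockB {L : List ℕ} {n d q : ℕ} {σ : ℕ → ℕ × ℕ} (hd : 0 < d)
    (hq : n = d * q) (hrst : IsRST L n σ) (hdiv : TabDivisor n d σ)
    {b : ℕ} (hb : b < q) : d ∣ (σ (b*d+1)).2 := by
  obtain ⟨⟨hinj, himg, hnorm⟩, hrow⟩ := hrst
  suffices H : ∀ s b, b < q → (σ (b*d+1)).2 = s → d ∣ s by exact H _ b hb rfl
  intro s
  induction s using Nat.strong_induction_on with
  | _ s ih =>
  intro b hb hs
  rcases Nat.eq_zero_or_pos s with rfl | hs0
  · exact dvd_zero d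
  have hbd : b*d + d ≤ n := by
    have h1 : (b+1)*d ≤ q*d := Nat.mul_le_mul_right d hb
    have h2 := aux_mul_succ b d
    have h3 : q*d = d*q := by ring
    omega
  have hi0 : b*d + 1 ∈ Set.Icc 1 n := ⟨by omega, by omega⟩
  have hcell : ((σ (b*d+1)).1, s) ∈ cells L := by
    rw [← himg]
    exact ⟨b*d+1, hi0, by rw [← hs]⟩
  have hcell' : (((σ (b*d+1)).1, s-1) : ℕ × ℕ) ∈ cells L := ⟨hcell.1, by
    have := hcell.2; simp only at this ⊢; omega⟩
  rw [← himg] at hcell'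
  obtain ⟨j, hj, hσj⟩ := hcell'
  obtain ⟨hjdec, hb'q, hkd⟩ := aux_dec hd hq hj.1 hj.2
  have hAj := blockA hd hq hdiv hb'q hkd
  rw [← hjdec, hσj] at hAj
  have hρρ : (σ (((j-1)/d)*d+1)).1 = (σ (b*d+1)).1 :=
    (congrArg Prod.fst hAj).symm
  have hscol : (σ (((j-1)/d)*d+1)).2 + (j-1)%d = s - 1 :=
    (congrArg Prod.snd hAj).symm
  by_cases hkend : (j-1)%d = d - 1
  · have : d ∣ (σ (((j-1)/d)*d+1)).2 := ih _ (by omega) _ hb'q rfl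
    obtain ⟨c, hc⟩ := this
    have e2 : d*(c+1) = d*c + d := by ring
    exact ⟨c + 1, by omega⟩
  · exfalso
    have hk1 : (j-1)%d + 1 < d := by omega
    have hAj1 := blockA hd hq hdiv hb'q hk1
    have hj1mem : ((j-1)/d)*d + 1 + ((j-1)%d+1) ∈ Set.Icc 1 n := by
      have h1 : ((j-1)/d + 1)*d ≤ q*d := Nat.mul_le_mul_right d hb'q
      have h2 := aux_mul_succ ((j-1)/d) d
      have h3 : q*d = d*q := by ring
      exact ⟨by omega, by omega⟩
    have heq : σ (((j-1)/d)*d + 1 + ((j-1)%d+1)) = σ (b*d+1) := by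
      rw [hAj1, hρρ]
      have : σ (b*d+1) = ((σ (b*d+1)).1, (σ (b*d+1)).2) := rfl
      rw [this, hs]
      congr 1
      omega
    have hje := hinj hj1mem hi0 heq
    have hdvd : d ∣ (j-1)%d + 1 := by
      rcases Nat.le_total ((j-1)/d) b with hle | hle
      · have : d ∣ b*d - ((j-1)/d)*d :=
          Nat.dvd_sub (dvd_mul_left d b) (dvd_mul_left d ((j-1)/d))
        rwa [show b*d - ((j-1)/d)*d = (j-1)%d+1 from by omega] at this
      · have hmm : b*d ≤ ((j-1)/d)*d := Nat.mul_le_mul_right d hle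
        omega
    have := Nat.le_of_dvd (by omega) hdvd
    omega

end Aux
section Aux2

/-- Value of the quotient tableau on block `b+1`. -/
lemma quotEq {L : List ℕ} {n d q : ℕ} {σ : ℕ → ℕ × ℕ} (hd : 0 < d)
    (hq : n = d * q) (hrst : IsRST L n σ) (hdiv : TabDivisor n d σ)
    {b : ℕ} (hb : b < q) :
    quotTab d σ (b+1) = ((σ (b*d+1)).1, (σ (b*d+1)).2 / d) := by
  have hA := blockA hd hq hdiv hb (show d - 1 < d by omega)
  have hB := blockB hd hq hrst hdiv hb
  obtain ⟨c, hc⟩ := hB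
  have e1 : d * (b+1) = b*d + 1 + (d-1) := by
    have : d * (b+1) = b*d + d := by ring
    omega
  unfold quotTab
  rw [e1, hA, hc]
  have e2 : d*c + (d-1) + 1 = d*(c+1) := by
    have : d*(c+1) = d*c + d := by ring
    omega
  rw [e2, Nat.mul_div_cancel_left _ hd, Nat.mul_div_cancel_left _ hd]
  simp

/-- Reconstruction of `σ` from its quotient. -/
lemma blockC {L : List ℕ} {n d q : ℕ} {σ : ℕ → ℕ × ℕ} (hd : 0 < d)
    (hq : n = d * q) (hrst : IsRST L n σ) (hdiv : TabDivisor n d σ)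
    {i : ℕ} (h1 : 1 ≤ i) (h2 : i ≤ n) :
    σ i = ((quotTab d σ ((i-1)/d + 1)).1,
      d * (quotTab d σ ((i-1)/d + 1)).2 + (i-1) % d) := by
  obtain ⟨hidec, hbq, hkd⟩ := aux_dec hd hq h1 h2
  have hA := blockA hd hq hdiv hbq hkd
  rw [← hidec] at hA
  rw [quotEq hd hq hrst hdiv hbq, hA]
  obtain ⟨c, hc⟩ := blockB hd hq hrst hdiv hbq
  rw [hc, Nat.mul_div_cancel_left _ hd]

end Aux2
section Aux3

lemma aux_enc {d q n b k : ℕ} (hd : 0 < d) (hq : n = d * q) (hb : b < q) (hk : k < d) :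
    ((b*d+1+k)-1)/d = b ∧ ((b*d+1+k)-1)%d = k ∧ 1 ≤ b*d+1+k ∧ b*d+1+k ≤ n := by
  have e : b*d + 1 + k - 1 = d*b + k := by
    have : b*d = d*b := by ring
    omega
  have h1 : (d*b + k)/d = b := by
    rw [Nat.mul_add_div hd, Nat.div_eq_of_lt hk, Nat.add_zero]
  have h2 : (d*b + k)%d = k := by
    rw [Nat.mul_add_mod, Nat.mod_eq_of_lt hk]
  have hbd : (b+1)*d ≤ q*d := Nat.mul_le_mul_right d hb
  have e2 := aux_mul_succ b d
  have e3 : q*d = d*q := by ring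
  refine ⟨by rw [e, h1], by rw [e, h2], by omega, by omega⟩

lemma aux_unique {d a b r s : ℕ} (hd : 0 < d) (hr : r < d) (hs : s < d)
    (h : d*a + r = d*b + s) : a = b ∧ r = s := by
  have e1 : (d*a+r)/d = a := by rw [Nat.mul_add_div hd, Nat.div_eq_of_lt hr, Nat.add_zero]
  have e2 : (d*b+s)/d = b := by rw [Nat.mul_add_div hd, Nat.div_eq_of_lt hs, Nat.add_zero]
  have hab : a = b := by rw [← e1, ← e2, h]
  subst hab
  exact ⟨rfl, by omega⟩

lemma getD_map_div {L : List ℕ} {d r : ℕ} (hr : r < L.length) :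
    (L.map (· / d)).getD r 0 = (L.getD r 0) / d := by
  rw [List.getD_eq_getElem _ _ (by simpa using hr), List.getD_eq_getElem _ _ hr,
    List.getElem_map]

lemma cells_map {L : List ℕ} (d : ℕ) :
    cells (L.map (· / d)) = {p : ℕ × ℕ | p.1 < L.length ∧ p.2 < (L.getD p.1 0)/d} := by
  ext ⟨r, c⟩
  simp only [cells, Set.mem_setOf_eq, List.length_map]
  constructor
  · rintro ⟨h1, h2⟩
    exact ⟨h1, by rwa [getD_map_div h1] at h2⟩
  · rintro ⟨h1, h2⟩
    exact ⟨h1, by rwa [getD_map_div h1]⟩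

/-- The inverse map: each box of `τ` labeled `m` at `(r,c)` is replaced by `d` boxes
labeled `(m-1)d+1, …, md` at `(r, dc), …, (r, dc+d-1)`. -/
def liftTab (d n : ℕ) (τ : ℕ → ℕ × ℕ) : ℕ → ℕ × ℕ :=
  fun i => if 1 ≤ i ∧ i ≤ n then
    ((τ ((i-1)/d + 1)).1, d * (τ ((i-1)/d + 1)).2 + (i-1) % d) else (0,0)

end Aux3
section Lift

lemma lift_good {L : List ℕ} {n d q : ℕ} {τ : ℕ → ℕ × ℕ} (hd : 0 < d)
    (hq : n = d * q) (hdL : ∀ x ∈ L, d ∣ x)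
    (hτ : IsRST (L.map (· / d)) q τ) :
    IsRST L n (liftTab d n τ) ∧ TabDivisor n d (liftTab d n τ) ∧
      quotTab d (liftTab d n τ) = τ := by
  obtain ⟨⟨tinj, timg, tnorm⟩, trow⟩ := hτ
  have hgd : ∀ r, r < L.length → d ∣ L.getD r 0 := by
    intro r hr
    refine hdL _ ?_
    rw [List.getD_eq_getElem _ _ hr]
    exact List.getElem_mem _
  have hval : ∀ i, 1 ≤ i → i ≤ n →
      liftTab d n τ i = ((τ ((i-1)/d + 1)).1, d * (τ ((i-1)/d + 1)).2 + (i-1) % d) := by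
    intro i h1 h2
    simp [liftTab, h1, h2]
  have hval0 : ∀ i, ¬(1 ≤ i ∧ i ≤ n) → liftTab d n τ i = (0,0) := by
    intro i h
    simp only [liftTab, if_neg h]
  have tmem : ∀ m, 1 ≤ m → m ≤ q →
      (τ m).1 < L.length ∧ (τ m).2 < (L.getD (τ m).1 0)/d := by
    intro m hm1 hm2
    have : τ m ∈ cells (L.map (· / d)) := by
      rw [← timg]; exact ⟨m, ⟨hm1, hm2⟩, rfl⟩
    rwa [cells_map] at this
  -- injectivity
  have hinj : Set.InjOn (liftTab d n τ) (Set.Icc 1 n) := by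
    rintro i ⟨hi1, hi2⟩ j ⟨hj1, hj2⟩ heq
    obtain ⟨hidec, hbi, hki⟩ := aux_dec hd hq hi1 hi2
    obtain ⟨hjdec, hbj, hkj⟩ := aux_dec hd hq hj1 hj2
    rw [hval i hi1 hi2, hval j hj1 hj2] at heq
    have h1 := congrArg Prod.fst heq
    have h2 := congrArg Prod.snd heq
    simp only at h1 h2
    obtain ⟨hc, hk⟩ := aux_unique hd hki hkj h2
    have hττ : τ ((i-1)/d + 1) = τ ((j-1)/d + 1) := Prod.ext h1 hc
    have hz1 := Nat.zero_le ((i-1)/d)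
    have hz2 := Nat.zero_le ((j-1)/d)
    have hmm := tinj ⟨by omega, by omega⟩ ⟨by omega, by omega⟩ hττ
    have hdi := Nat.div_add_mod (i-1) d
    have hdj := Nat.div_add_mod (j-1) d
    have hde : (i-1)/d = (j-1)/d := by omega
    have : d*((i-1)/d) = d*((j-1)/d) := by rw [hde]
    omega
  -- image
  have himg : liftTab d n τ '' Set.Icc 1 n = cells L := by
    apply Set.Subset.antisymm
    · rintro p ⟨i, ⟨hi1, hi2⟩, rfl⟩
      obtain ⟨hidec, hbi, hki⟩ := aux_dec hd hq hi1 hi2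
      rw [hval i hi1 hi2]
      have hz1 := Nat.zero_le ((i-1)/d)
      obtain ⟨hrow, hcol⟩ := tmem ((i-1)/d + 1) (by omega) (by omega)
      refine ⟨hrow, ?_⟩
      obtain ⟨u, hu⟩ := hgd _ hrow
      rw [hu] at hcol ⊢
      rw [Nat.mul_div_cancel_left _ hd] at hcol
      have h3 : d * ((τ ((i-1)/d + 1)).2 + 1) ≤ d * u := Nat.mul_le_mul_left d (by omega)
      have h4 : d * ((τ ((i-1)/d + 1)).2 + 1) = d * (τ ((i-1)/d + 1)).2 + d := by ring
      simp only
      omega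
    · rintro ⟨row, col⟩ ⟨h1, h2⟩
      simp only at h1 h2
      obtain ⟨u, hu⟩ := hgd _ h1
      have hcq : col / d < u := aux_div_lt hd (by omega)
      have hcell' : ((row, col / d) : ℕ × ℕ) ∈ cells (L.map (· / d)) := by
        rw [cells_map]
        exact ⟨h1, by simp only; rw [hu, Nat.mul_div_cancel_left _ hd]; exact hcq⟩
      rw [← timg] at hcell'
      obtain ⟨m, ⟨hm1, hm2⟩, hτm⟩ := hcell'
      obtain ⟨b, rfl⟩ : ∃ b, m = b + 1 := ⟨m - 1, by omega⟩
      have hkd : col % d < d := Nat.mod_lt _ hd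
      obtain ⟨e1, e2, e3, e4⟩ := aux_enc hd hq (show b < q by omega) hkd
      refine ⟨b*d+1+(col % d), ⟨e3, e4⟩, ?_⟩
      rw [hval _ e3 e4, e1, e2, hτm]
      have := Nat.div_add_mod col d
      simp only
      rw [Prod.mk.injEq]
      exact ⟨rfl, by omega⟩
  -- normalization
  have hnorm : ∀ i, i ∉ Set.Icc 1 n → liftTab d n τ i = (0,0) := by
    intro i hi
    exact hval0 i (by simpa [Set.mem_Icc] using hi)
  -- row strictness
  have hrowstrict : RowStrict n (liftTab d n τ) := by
    intro i j ⟨hi1, hi2⟩ ⟨hj1, hj2⟩ hfst hsnd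
    obtain ⟨hidec, hbi, hki⟩ := aux_dec hd hq hi1 hi2
    obtain ⟨hjdec, hbj, hkj⟩ := aux_dec hd hq hj1 hj2
    rw [hval i hi1 hi2, hval j hj1 hj2] at hfst hsnd
    simp only at hfst hsnd
    by_cases hke : (i-1)%d + 1 < d
    · have heq : d * (τ ((j-1)/d+1)).2 + (j-1)%d
          = d * (τ ((i-1)/d+1)).2 + ((i-1)%d + 1) := by omega
      obtain ⟨hc, hk⟩ := aux_unique hd hkj hke heq
      have hττ : τ ((j-1)/d + 1) = τ ((i-1)/d + 1) := Prod.ext hfst hc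
      have hz1 := Nat.zero_le ((i-1)/d)
      have hz2 := Nat.zero_le ((j-1)/d)
      have hmm := tinj ⟨by omega, by omega⟩ ⟨by omega, by omega⟩ hττ
      have hdi := Nat.div_add_mod (i-1) d
      have hdj := Nat.div_add_mod (j-1) d
      have hde : (j-1)/d = (i-1)/d := by omega
      have : d*((j-1)/d) = d*((i-1)/d) := by rw [hde]
      omega
    · have hkiv : (i-1)%d = d - 1 := by omega
      have heq : d * (τ ((j-1)/d+1)).2 + (j-1)%d
          = d * ((τ ((i-1)/d+1)).2 + 1) + 0 := by
        have : d * ((τ ((i-1)/d+1)).2 + 1) = d * (τ ((i-1)/d+1)).2 + d := by ring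
        omega
      obtain ⟨hc, hk⟩ := aux_unique hd hkj hd heq
      have hz1 := Nat.zero_le ((i-1)/d)
      have hz2 := Nat.zero_le ((j-1)/d)
      have hmlt : (i-1)/d + 1 < (j-1)/d + 1 := by
        refine trow _ _ ⟨by omega, by omega⟩ ⟨by omega, by omega⟩ hfst ?_
        rw [hc]
      have hbb : ((i-1)/d + 1) * d ≤ ((j-1)/d) * d := Nat.mul_le_mul_right d (by omega)
      have e5 := aux_mul_succ ((i-1)/d) d
      have hdi := Nat.div_add_mod (i-1) d
      have hdj := Nat.div_add_mod (j-1) d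
      have e6 : ((i-1)/d)*d = d*((i-1)/d) := by ring
      have e7 : ((j-1)/d)*d = d*((j-1)/d) := by ring
      omega
  -- divisor d
  have hdivd : TabDivisor n d (liftTab d n τ) := by
    refine ⟨⟨q, hq⟩, ?_⟩
    intro i hi1 hi2 hnd
    obtain ⟨hidec, hbi, hki⟩ := aux_dec hd hq hi1 (by omega)
    have hdi := Nat.div_add_mod (i-1) d
    have hke : (i-1)%d + 1 < d := by
      rcases Nat.lt_or_ge ((i-1)%d + 1) d with h | h
      · exact h
      · exfalso
        exact hnd ⟨(i-1)/d + 1, by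
          have : d * ((i-1)/d + 1) = d * ((i-1)/d) + d := by ring
          omega⟩
    have hi' : (i+1-1)/d = (i-1)/d ∧ (i+1-1)%d = (i-1)%d + 1 := by
      have e : i + 1 - 1 = d * ((i-1)/d) + ((i-1)%d + 1) := by omega
      constructor
      · rw [e, Nat.mul_add_div hd, Nat.div_eq_of_lt hke, Nat.add_zero]
      · rw [e, Nat.mul_add_mod, Nat.mod_eq_of_lt hke]
    rw [hval i hi1 (by omega), hval (i+1) (by omega) (by omega), hi'.1, hi'.2]
    simp [Nat.add_assoc]
  -- quotient recovers τ
  have hquot : quotTab d (liftTab d n τ) = τ := by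
    funext m
    by_cases hm : 1 ≤ m ∧ m ≤ q
    · obtain ⟨b, rfl⟩ : ∃ b, m = b + 1 := ⟨m - 1, by omega⟩
      rw [quotEq hd hq ⟨⟨hinj, himg, hnorm⟩, hrowstrict⟩ hdivd (show b < q by omega)]
      obtain ⟨f1, f2, f3, f4⟩ := aux_enc hd hq (show b < q by omega) hd
      rw [show b*d+1 = b*d+1+0 from rfl, hval _ (by omega) (by omega)]
      rw [show (b*d+1+0-1)/d + 1 = b + 1 from by rw [f1], show (b*d+1+0-1)%d = 0 from f2]
      simp only [Nat.add_zero]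
      rw [Nat.mul_div_cancel_left _ hd]
    · have hτm : τ m = (0,0) := tnorm m (by simp [Set.mem_Icc]; omega)
      have hσ : liftTab d n τ (d * m) = (0,0) := by
        apply hval0
        rcases Nat.eq_zero_or_pos m with rfl | hm0
        · simp
        · have : d * (q+1) ≤ d * m := Nat.mul_le_mul_left d (by omega)
          have : d * (q+1) = d*q + d := by ring
          omega
      unfold quotTab
      rw [hσ, hτm]
      simp only
      have h1d : (0+1:ℕ)/d ≤ 1 := Nat.div_le_self _ d
      have h1z := Nat.zero_le ((0+1:ℕ)/d)
      rw [Prod.mk.injEq]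
      exact ⟨rfl, by omega⟩
  exact ⟨⟨⟨hinj, himg, hnorm⟩, hrowstrict⟩, hdivd, hquot⟩

end Lift
section Quot

lemma quot_rst {L : List ℕ} {n d q : ℕ} {σ : ℕ → ℕ × ℕ} (hd : 0 < d)
    (hq : n = d * q) (hdL : ∀ x ∈ L, d ∣ x) (hrst : IsRST L n σ)
    (hdiv : TabDivisor n d σ) : IsRST (L.map (· / d)) q (quotTab d σ) := by
  obtain ⟨⟨sinj, simg, snorm⟩, srow⟩ := hrst
  have hgd : ∀ r, r < L.length → d ∣ L.getD r 0 := by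
    intro r hr
    refine hdL _ ?_
    rw [List.getD_eq_getElem _ _ hr]
    exact List.getElem_mem _
  have hQ : ∀ b, b < q → quotTab d σ (b+1) = ((σ (b*d+1)).1, (σ (b*d+1)).2 / d) :=
    fun b hb => quotEq hd hq ⟨⟨sinj, simg, snorm⟩, srow⟩ hdiv hb
  have hB : ∀ b, b < q → d ∣ (σ (b*d+1)).2 :=
    fun b hb => blockB hd hq ⟨⟨sinj, simg, snorm⟩, srow⟩ hdiv hb
  have hmem : ∀ b, b < q → σ (b*d+1) ∈ cells L := by
    intro b hb
    obtain ⟨e1, e2, e3, e4⟩ := aux_enc hd hq hb hd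
    rw [← simg]
    exact ⟨b*d+1, ⟨by omega, by omega⟩, rfl⟩
  refine ⟨⟨?_, ?_, ?_⟩, ?_⟩
  · -- injective
    rintro m1 ⟨h11, h12⟩ m2 ⟨h21, h22⟩ heq
    obtain ⟨b1, rfl⟩ : ∃ b, m1 = b + 1 := ⟨m1 - 1, by omega⟩
    obtain ⟨b2, rfl⟩ : ∃ b, m2 = b + 1 := ⟨m2 - 1, by omega⟩
    rw [hQ b1 (by omega), hQ b2 (by omega)] at heq
    have h1 := congrArg Prod.fst heq
    have h2 := congrArg Prod.snd heq
    simp only at h1 h2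
    obtain ⟨c1, hc1⟩ := hB b1 (by omega)
    obtain ⟨c2, hc2⟩ := hB b2 (by omega)
    rw [hc1, hc2, Nat.mul_div_cancel_left _ hd, Nat.mul_div_cancel_left _ hd] at h2
    have hss : σ (b1*d+1) = σ (b2*d+1) := Prod.ext h1 (by rw [hc1, hc2, h2])
    obtain ⟨e1, e2, e3, e4⟩ := aux_enc hd hq (show b1 < q by omega) hd
    obtain ⟨f1, f2, f3, f4⟩ := aux_enc hd hq (show b2 < q by omega) hd
    have := sinj ⟨by omega, by omega⟩ ⟨by omega, by omega⟩ hss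
    have hb12 : b1 * d = b2 * d := by omega
    have := Nat.eq_of_mul_eq_mul_right hd hb12
    omega
  · -- image
    apply Set.Subset.antisymm
    · rintro p ⟨m, ⟨hm1, hm2⟩, rfl⟩
      obtain ⟨b, rfl⟩ : ∃ b, m = b + 1 := ⟨m - 1, by omega⟩
      rw [hQ b (by omega), cells_map]
      obtain ⟨hr, hc⟩ := hmem b (by omega)
      refine ⟨hr, ?_⟩
      obtain ⟨u, hu⟩ := hgd _ hr
      obtain ⟨c, hcc⟩ := hB b (by omega)
      simp only
      rw [hu, hcc, Nat.mul_div_cancel_left _ hd, Nat.mul_div_cancel_left _ hd]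
      rw [hu, hcc] at hc
      exact lt_of_mul_lt_mul_left hc (Nat.zero_le d)
    · rintro ⟨row, col⟩ hp
      rw [cells_map] at hp
      obtain ⟨h1, h2⟩ := hp
      simp only at h1 h2
      obtain ⟨u, hu⟩ := hgd _ h1
      rw [hu, Nat.mul_div_cancel_left _ hd] at h2
      have hcell : ((row, d*col + (d-1)) : ℕ × ℕ) ∈ cells L := by
        refine ⟨h1, ?_⟩
        simp only
        rw [hu]
        have : d * (col+1) ≤ d * u := Nat.mul_le_mul_left d (by omega)
        have e : d * (col+1) = d*col + d := by ring
        omega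
      rw [← simg] at hcell
      obtain ⟨i, ⟨hi1, hi2⟩, hσi⟩ := hcell
      have hC := blockC hd hq ⟨⟨sinj, simg, snorm⟩, srow⟩ hdiv hi1 hi2
      rw [hσi] at hC
      have h3 := congrArg Prod.fst hC
      have h4 := congrArg Prod.snd hC
      simp only at h3 h4
      obtain ⟨hidec, hbi, hki⟩ := aux_dec hd hq hi1 hi2
      obtain ⟨hcq, hkq⟩ := aux_unique hd hki (by omega) h4.symm
      have hz1 := Nat.zero_le ((i-1)/d)
      refine ⟨(i-1)/d + 1, ⟨by omega, by omega⟩, ?_⟩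
      exact Prod.ext h3.symm hcq
  · -- normalization
    intro m hm
    simp only [Set.mem_Icc, not_and_or, not_le] at hm
    have hσ0 : σ (d * m) = (0, 0) := by
      apply snorm
      simp only [Set.mem_Icc, not_and_or, not_le]
      rcases hm with hm | hm
      · have hm0 : m = 0 := by omega
        left
        rw [hm0, Nat.mul_zero]
        omega
      · right
        have : d * (q+1) ≤ d * m := Nat.mul_le_mul_left d (by omega)
        have e : d * (q+1) = d*q + d := by ring
        omega
    unfold quotTab
    rw [hσ0]
    simp only
    have h1d : (0+1:ℕ)/d ≤ 1 := Nat.div_le_self _ d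
    have h1z := Nat.zero_le ((0+1:ℕ)/d)
    rw [Prod.mk.injEq]
    exact ⟨rfl, by omega⟩
  · -- row strict
    rintro mi mj ⟨hi1, hi2⟩ ⟨hj1, hj2⟩ hfst hsnd
    obtain ⟨bi, rfl⟩ : ∃ b, mi = b + 1 := ⟨mi - 1, by omega⟩
    obtain ⟨bj, rfl⟩ : ∃ b, mj = b + 1 := ⟨mj - 1, by omega⟩
    rw [hQ bi (by omega), hQ bj (by omega)] at hfst hsnd
    simp only at hfst hsnd
    obtain ⟨ci, hci⟩ := hB bi (by omega)
    obtain ⟨cj, hcj⟩ := hB bj (by omega)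
    rw [hci, hcj, Nat.mul_div_cancel_left _ hd, Nat.mul_div_cancel_left _ hd] at hsnd
    have hA := blockA hd hq hdiv (show bi < q by omega) (show d - 1 < d by omega)
    obtain ⟨e1, e2, e3, e4⟩ := aux_enc hd hq (show bi < q by omega) (show d-1 < d by omega)
    obtain ⟨f1, f2, f3, f4⟩ := aux_enc hd hq (show bj < q by omega) hd
    have hstep : bi*d+1+(d-1) < bj*d+1 := by
      refine srow _ _ ⟨by omega, by omega⟩ ⟨by omega, by omega⟩ ?_ ?_
      · rw [hA]; exact hfst
      · rw [hA]
        simp only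
        have ed : d * (cj) = d*ci + d := by rw [hsnd]; ring
        omega
    have : (bi+1)*d ≤ bj*d := by
      have := aux_mul_succ bi d
      omega
    have := Nat.le_of_mul_le_mul_right this hd
    omega

lemma quot_div {L : List ℕ} {n d q e : ℕ} {σ : ℕ → ℕ × ℕ} (hd : 0 < d)
    (hq : n = d * q) (hrst : IsRST L n σ) (hdiv : TabDivisor n d σ)
    (hediv : TabDivisor q e (quotTab d σ)) : TabDivisor n (d*e) σ := by
  constructor
  · rw [hq]; exact mul_dvd_mul_left d hediv.1
  · intro i hi1 hi2 hde
    by_cases hdi : d ∣ i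
    · obtain ⟨m, rfl⟩ := hdi
      obtain ⟨b, rfl⟩ : ∃ b, m = b + 1 := ⟨m - 1, by
        rcases Nat.eq_zero_or_pos m with rfl | h
        · simp at hi1
        · omega⟩
      have hbq : b + 1 < q := by
        by_contra h
        have : d * q ≤ d * (b+1) := Nat.mul_le_mul_left d (by omega)
        omega
      have hem : ¬ e ∣ (b+1) := fun ⟨c, hc⟩ => hde ⟨c, by rw [hc]; ring⟩
      have hstep := hediv.2 (b+1) (by omega) (by omega) hem
      have hQ1 := quotEq hd hq hrst hdiv (show b < q by omega)
      have hQ2 := quotEq hd hq hrst hdiv (show b+1 < q by omega)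
      rw [hQ1] at hstep
      rw [show b+1+1 = (b+1)+1 from rfl, hQ2] at hstep
      have h1 := congrArg Prod.fst hstep
      have h2 := congrArg Prod.snd hstep
      simp only at h1 h2
      obtain ⟨ci, hci⟩ := blockB hd hq hrst hdiv (show b < q by omega)
      obtain ⟨cj, hcj⟩ := blockB hd hq hrst hdiv (show b+1 < q by omega)
      rw [hci, hcj, Nat.mul_div_cancel_left _ hd, Nat.mul_div_cancel_left _ hd] at h2
      have hA := blockA hd hq hdiv (show b < q by omega) (show d - 1 < d by omega)
      have eidx : d * (b+1) = b*d+1+(d-1) := by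
        have : d*(b+1) = b*d + d := by ring
        omega
      have eidx2 : d * (b+1) + 1 = (b+1)*d+1 := by
        have := aux_mul_succ b d
        omega
      have g1 : σ (d*(b+1)) = σ (b*d+1+(d-1)) := congrArg σ eidx
      have g2 : σ (d*(b+1)+1) = σ ((b+1)*d+1) := congrArg σ eidx2
      rw [g1, g2, hA]
      refine Prod.ext h1 ?_
      simp only
      have ed : d * cj = d * ci + d := by rw [h2]; ring
      omega
    · exact hdiv.2 i hi1 hi2 hdi

lemma div_quot {L : List ℕ} {n d q k : ℕ} {σ : ℕ → ℕ × ℕ} (hd : 0 < d)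
    (hq : n = d * q) (hrst : IsRST L n σ) (hdiv : TabDivisor n d σ)
    (hdk : d ∣ k) (hkdiv : TabDivisor n k σ) : TabDivisor q (k/d) (quotTab d σ) := by
  obtain ⟨e, rfl⟩ := hdk
  rw [Nat.mul_div_cancel_left _ hd]
  constructor
  · have h1 : d * e ∣ d * q := hq ▸ hkdiv.1
    exact (mul_dvd_mul_iff_left (by omega : d ≠ 0)).mp h1
  · intro m hm1 hm2 hem
    obtain ⟨b, rfl⟩ : ∃ b, m = b + 1 := ⟨m - 1, by omega⟩
    have hde : ¬ d*e ∣ d*(b+1) := by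
      intro ⟨c, hc⟩
      exact hem ⟨c, by
        have : d * (e * c) = d * e * c := by ring
        have := Nat.eq_of_mul_eq_mul_left hd (hc.trans this.symm)
        omega⟩
    have hin : 1 ≤ d * (b+1) ∧ d * (b+1) < n := by
      constructor
      · have : d * 1 ≤ d * (b+1) := Nat.mul_le_mul_left d (by omega)
        omega
      · have : d * (b+2) ≤ d * q := Nat.mul_le_mul_left d (by omega)
        have e2 : d * (b+2) = d*(b+1) + d := by ring
        omega
    have hstep := hkdiv.2 (d*(b+1)) hin.1 hin.2 hde
    have hA := blockA hd hq hdiv (show b < q by omega) (show d - 1 < d by omega)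
    have eidx : d * (b+1) = b*d+1+(d-1) := by
      have : d*(b+1) = b*d + d := by ring
      omega
    have eidx2 : d * (b+1) + 1 = (b+1)*d+1 := by
      have := aux_mul_succ b d
      omega
    have g1 : σ (d*(b+1)) = σ (b*d+1+(d-1)) := congrArg σ eidx
    have g2 : σ (d*(b+1)+1) = σ ((b+1)*d+1) := congrArg σ eidx2
    rw [g1, g2, hA] at hstep
    have h1 := congrArg Prod.fst hstep
    have h2 := congrArg Prod.snd hstep
    simp only at h1 h2
    have hQ1 := quotEq hd hq hrst hdiv (show b < q by omega)
    have hQ2 := quotEq hd hq hrst hdiv (show b+1 < q by omega)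
    rw [show b+1+1 = (b+1)+1 from rfl, hQ2, hQ1]
    refine Prod.ext (by simpa using h1) ?_
    simp only
    obtain ⟨ci, hci⟩ := blockB hd hq hrst hdiv (show b < q by omega)
    obtain ⟨cj, hcj⟩ := blockB hd hq hrst hdiv (show b+1 < q by omega)
    have hsj : (σ ((b+1)*d+1)).2 = (σ (b*d+1)).2 + d := by omega
    have e9 : d*ci + d = d*(ci+1) := by ring
    rw [hsj, hci, e9, Nat.mul_div_cancel_left _ hd, Nat.mul_div_cancel_left _ hd]

lemma lcm_div {n a b : ℕ} {σ : ℕ → ℕ × ℕ} (ha : TabDivisor n a σ)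
    (hb : TabDivisor n b σ) : TabDivisor n (Nat.lcm a b) σ := by
  refine ⟨Nat.lcm_dvd ha.1 hb.1, ?_⟩
  intro i h1 h2 hl
  by_cases hai : a ∣ i
  · by_cases hbi : b ∣ i
    · exact absurd (Nat.lcm_dvd hai hbi) hl
    · exact hb.2 i h1 h2 hbi
  · exact ha.2 i h1 h2 hai

lemma recon {L : List ℕ} {n d q : ℕ} {σ : ℕ → ℕ × ℕ} (hd : 0 < d)
    (hq : n = d * q) (hrst : IsRST L n σ) (hdiv : TabDivisor n d σ) :
    liftTab d n (quotTab d σ) = σ := by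
  funext i
  by_cases hi : 1 ≤ i ∧ i ≤ n
  · have hC := blockC hd hq hrst hdiv hi.1 hi.2
    simp only [liftTab, if_pos hi]
    exact hC.symm
  · simp only [liftTab, if_neg hi]
    exact (hrst.1.2.2 i (by simpa [Set.mem_Icc] using hi)).symm

end Quot
/-- For each common divisor `d` of the parts of `λ ⊢ n`, the map `σ ↦ σ/d` is a
bijection between the row-strict tableaux of shape `λ` with maximal divisor exactly `d`
and the indivisible row-strict tableaux of shape `λ/d`. -/
theorem stmt16 (L : List ℕ) (n d : ℕ) (hL : IsPartition L n) (hn : 0 < n)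
    (hd : 0 < d) (hdL : ∀ x ∈ L, d ∣ x) :
    Set.BijOn (quotTab d)
      {σ : ℕ → ℕ × ℕ | IsRST L n σ ∧ IsGreatest {e : ℕ | 0 < e ∧ TabDivisor n e σ} d}
      {τ : ℕ → ℕ × ℕ | IsRST (L.map (· / d)) (n / d) τ ∧
        ∀ e, 0 < e → TabDivisor (n / d) e τ → e = 1} := by

  have hdn : d ∣ n := by
    rw [← hL.1]
    exact List.dvd_sum hdL
  have hq : n = d * (n / d) := (Nat.mul_div_cancel' hdn).symm
  refine ⟨?_, ?_, ?_⟩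
  · -- maps to
    rintro σ ⟨hrst, hgr⟩
    have hdiv : TabDivisor n d σ := hgr.1.2
    refine ⟨quot_rst hd hq hdL hrst hdiv, ?_⟩
    intro e he hediv
    have hde : TabDivisor n (d*e) σ := quot_div hd hq hrst hdiv hediv
    have hle : d * e ≤ d := hgr.2 ⟨by positivity, hde⟩
    have : d * 1 ≤ d * e := Nat.mul_le_mul_left d he
    by_contra hne
    have h2 : d * 2 ≤ d * e := Nat.mul_le_mul_left d (by omega)
    have e1 : d * 1 = d := by ring
    have e2 : d * 2 = d + d := by ring
    omega
  · -- injective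
    rintro σ1 ⟨hrst1, hgr1⟩ σ2 ⟨hrst2, hgr2⟩ heq
    have h1 := recon hd hq hrst1 hgr1.1.2
    have h2 := recon hd hq hrst2 hgr2.1.2
    rw [← h1, ← h2, heq]
  · -- surjective
    rintro τ ⟨hτrst, hτind⟩
    obtain ⟨hrstσ, hdivσ, hquotσ⟩ := lift_good hd hq hdL hτrst
    refine ⟨liftTab d n τ, ⟨hrstσ, ⟨⟨hd, hdivσ⟩, ?_⟩⟩, hquotσ⟩
    rintro e ⟨he, hediv⟩
    have hl0 : 0 < Nat.lcm d e := Nat.lcm_pos hd he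
    have hlcm : TabDivisor n (Nat.lcm d e) (liftTab d n τ) := lcm_div hdivσ hediv
    have hdl : d ∣ Nat.lcm d e := Nat.dvd_lcm_left d e
    have hquotdiv : TabDivisor (n/d) (Nat.lcm d e / d) (quotTab d (liftTab d n τ)) :=
      div_quot hd hq hrstσ hdivσ hdl hlcm
    rw [hquotσ] at hquotdiv
    have hld : Nat.lcm d e / d = 1 := by
      apply hτind _ _ hquotdiv
      exact Nat.div_pos (Nat.le_of_dvd hl0 hdl) hd
    have hlde : Nat.lcm d e = d := by
      have := Nat.div_mul_cancel hdl
      rw [hld] at this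
      omega
    have : e ∣ d := hlde ▸ Nat.dvd_lcm_right d e
    exact Nat.le_of_dvd hd this
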